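/- (Load bound for nested sets of tight jobs; core of the exponential-increase lemma.) Let α ∈ (0,1) and let J be a finite set of jobs feasible on m machines. Let S_0, S_1, …, S_k ⊆ J be pairwise disjoint sets, each consisting of α-tight jobs, such that I(S_i) ⊆ I(S_k) for every 0 ≤ i < k. Then α·Σ_{i=0}^{k−1} |I(S_i)| ≤ m·|I(S_k)|. In particular, if additionally |I(S_i)| ≥ |I(S_0)| for all i and α·k ≥ 2m, then |I(S_k)| ≥ 2·|I(S_0)|. -/

import Mathlib

/-- A job given by integer release date `r`, deadline `d`, and processing time `p`. -/
structure Job where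
  r : ℤ
  d : ℤ
  p : ℤ
deriving DecidableEq

/-- A job is valid if `1 ≤ p` and `r + p ≤ d`. -/
def Job.valid (j : Job) : Prop := 1 ≤ j.p ∧ j.r + j.p ≤ j.d

/-- The interval `I(j) = {t ∈ ℤ : r ≤ t < d}` of a job. -/
noncomputable def Job.interval (j : Job) : Finset ℤ := Finset.Ico j.r j.d

/-- The laxity `ℓ_j = d - r - p` of a job. -/
def Job.lax (j : Job) : ℤ := j.d - j.r - j.p

/-- The contribution `C(j, I) = max {0, |I ∩ I(j)| - ℓ_j}` of a job to a finite set `I ⊆ ℤ`. -/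
noncomputable def contribution (j : Job) (I : Finset ℤ) : ℤ :=
  max 0 (((I ∩ j.interval).card : ℤ) - j.lax)

/-- A finite set of jobs `J` is feasible on `m` machines. -/
def Feasible (J : Finset Job) (m : ℕ) : Prop :=
  ∃ σ : ℤ → Finset Job,
    (∀ t, σ t ⊆ J) ∧
    (∀ t, (σ t).card ≤ m) ∧
    (∀ t, ∀ j ∈ σ t, j.r ≤ t ∧ t < j.d) ∧
    (∀ j ∈ J, ((Finset.Ico j.r j.d).filter (fun t => j ∈ σ t)).card = j.p.toNat)

/-- A job is `α`-tight if `p_j > α (d_j - r_j)`. -/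
def AlphaTight (α : ℝ) (j : Job) : Prop := α * ((j.d : ℝ) - (j.r : ℝ)) < (j.p : ℝ)

/-- The `β`-interval `I_β(j) = [r_j + βℓ_j, d_j - βℓ_j)` of a job (a real interval). -/
def betaInterval (β : ℝ) (j : Job) : Set ℝ :=
  Set.Ico ((j.r : ℝ) + β * (j.lax : ℝ)) ((j.d : ℝ) - β * (j.lax : ℝ))

/-- Two jobs are agreeable if `(r_j - r_{j'})·(d_j - d_{j'}) ≥ 0`. -/
def Agreeable (j j' : Job) : Prop :=
  0 ≤ ((j.r : ℝ) - (j'.r : ℝ)) * ((j.d : ℝ) - (j'.d : ℝ))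

/-- Two jobs are `β`-agreeable if they are agreeable and their `β`-intervals intersect. -/
def BetaAgreeable (β : ℝ) (j j' : Job) : Prop :=
  Agreeable j j' ∧ (betaInterval β j ∩ betaInterval β j').Nonempty

/-- `I(S) = ⋃_{j ∈ S} I(j)` for a finite set of jobs. -/
noncomputable def intervalSet (S : Finset Job) : Finset ℤ := S.biUnion (fun j => Finset.Ico j.r j.d)

/-- load bound for nested sets of tight jobs: for pairwise disjoint sets
`S_0, …, S_k ⊆ J` of α-tight jobs with `I(S_i) ⊆ I(S_k)` for `i < k`, we have
`α·Σ_{i<k} |I(S_i)| ≤ m·|I(S_k)|`; in particular, if `|I(S_i)| ≥ |I(S_0)|` for all `i`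
and `α·k ≥ 2m`, then `|I(S_k)| ≥ 2·|I(S_0)|`. -/
theorem nested_tight_load_bound
    (α : ℝ) (hα : α ∈ Set.Ioo (0 : ℝ) 1)
    (J : Finset Job) (hJ : ∀ j ∈ J, j.valid) (m : ℕ) (hfeas : Feasible J m)
    (k : ℕ) (S : ℕ → Finset Job)
    (hsub : ∀ i ≤ k, S i ⊆ J)
    (hdisj : ∀ i ≤ k, ∀ i' ≤ k, i ≠ i' → Disjoint (S i) (S i'))
    (htight : ∀ i ≤ k, ∀ j ∈ S i, AlphaTight α j)
    (hnest : ∀ i < k, intervalSet (S i) ⊆ intervalSet (S k)) :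
    α * ∑ i ∈ Finset.range k, ((intervalSet (S i)).card : ℝ)
        ≤ (m : ℝ) * ((intervalSet (S k)).card : ℝ) ∧
    ((∀ i ≤ k, (intervalSet (S 0)).card ≤ (intervalSet (S i)).card) →
      2 * (m : ℝ) ≤ α * (k : ℝ) →
      2 * (intervalSet (S 0)).card ≤ (intervalSet (S k)).card) := by

  obtain ⟨σ, hσJ, hσm, hσtime, hσp⟩ := hfeas
  have hα0 := hα.1
  set A := intervalSet (S k) with hA
  -- counting lemma
  have key : ∑ i ∈ Finset.range k, ∑ j ∈ S i, j.p.toNat ≤ m * A.card := by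
    classical
    set T : Finset Job := (Finset.range k).biUnion S with hT
    have hpd : ∀ i ∈ Finset.range k, ∀ i' ∈ Finset.range k, i ≠ i' →
        Disjoint (S i) (S i') := by
      intro i hi i' hi' hne
      exact hdisj i (le_of_lt (Finset.mem_range.mp hi)) i'
        (le_of_lt (Finset.mem_range.mp hi')) hne
    have hsumT : ∀ f : Job → ℕ,
        ∑ j ∈ T, f j = ∑ i ∈ Finset.range k, ∑ j ∈ S i, f j := by
      intro f; exact Finset.sum_biUnion hpd
    calc ∑ i ∈ Finset.range k, ∑ j ∈ S i, j.p.toNat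
        = ∑ j ∈ T, j.p.toNat := (hsumT _).symm
      _ = ∑ j ∈ T, ((Finset.Ico j.r j.d).filter (fun t => j ∈ σ t)).card := by
          apply Finset.sum_congr rfl
          intro j hj
          obtain ⟨i, hi, hji⟩ := Finset.mem_biUnion.mp hj
          exact (hσp j (hsub i (le_of_lt (Finset.mem_range.mp hi)) hji)).symm
      _ ≤ ∑ j ∈ T, (A.filter (fun t => j ∈ σ t)).card := by
          apply Finset.sum_le_sum
          intro j hj
          obtain ⟨i, hi, hji⟩ := Finset.mem_biUnion.mp hj
          apply Finset.card_le_card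
          apply Finset.filter_subset_filter
          refine (Finset.subset_biUnion_of_mem _ hji).trans
            (hnest i (Finset.mem_range.mp hi))
      _ = ∑ t ∈ A, (T.filter (fun j => j ∈ σ t)).card := by
          simp only [Finset.card_filter]
          rw [Finset.sum_comm]
      _ ≤ ∑ t ∈ A, m := by
          apply Finset.sum_le_sum
          intro t _
          refine le_trans (Finset.card_le_card ?_) (hσm t)
          intro j hj
          exact (Finset.mem_filter.mp hj).2
      _ = m * A.card := by rw [Finset.sum_const, smul_eq_mul, mul_comm]
  -- tightness lemma
  have h1 : ∀ i ≤ k, α * ((intervalSet (S i)).card : ℝ) ≤ ∑ j ∈ S i, (j.p : ℝ) := by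
    intro i hi
    have hcard : ((intervalSet (S i)).card : ℝ) ≤ ∑ j ∈ S i, ((Finset.Ico j.r j.d).card : ℝ) := by
      have := Finset.card_biUnion_le (s := S i) (t := fun j => Finset.Ico j.r j.d)
      exact_mod_cast this
    calc α * ((intervalSet (S i)).card : ℝ)
        ≤ α * ∑ j ∈ S i, ((Finset.Ico j.r j.d).card : ℝ) := by
          exact mul_le_mul_of_nonneg_left hcard (le_of_lt hα0)
      _ = ∑ j ∈ S i, α * ((Finset.Ico j.r j.d).card : ℝ) := Finset.mul_sum _ _ _
      _ ≤ ∑ j ∈ S i, (j.p : ℝ) := by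
          apply Finset.sum_le_sum
          intro j hj
          have htj := htight i hi j hj
          have hvj := hJ j (hsub i hi hj)
          have hp1 : (1 : ℝ) ≤ (j.p : ℝ) := by exact_mod_cast hvj.1
          rw [Int.card_Ico]
          by_cases h : j.r ≤ j.d
          · have : (((j.d - j.r).toNat : ℤ) : ℝ) = ((j.d : ℝ) - (j.r : ℝ)) := by
              rw [Int.toNat_of_nonneg (by omega)]; push_cast; ring
            rw [show (((j.d - j.r).toNat : ℕ) : ℝ) = (((j.d - j.r).toNat : ℤ) : ℝ) by push_cast; ring, this]
            exact le_of_lt htj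
          · have : (j.d - j.r).toNat = 0 := by omega
            rw [this]
            simp only [Nat.cast_zero, mul_zero]
            linarith
  -- part 1
  have part1 : α * ∑ i ∈ Finset.range k, ((intervalSet (S i)).card : ℝ)
      ≤ (m : ℝ) * (A.card : ℝ) := by
    have hcast : ∀ i ≤ k, ∑ j ∈ S i, (j.p : ℝ) = ((∑ j ∈ S i, j.p.toNat : ℕ) : ℝ) := by
      intro i hi
      push_cast
      apply Finset.sum_congr rfl
      intro j hj
      have hvj := hJ j (hsub i hi hj)
      have hp0 : (0:ℤ) ≤ j.p := by have := hvj.1; omega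
      exact_mod_cast (Int.toNat_of_nonneg hp0).symm
    calc α * ∑ i ∈ Finset.range k, ((intervalSet (S i)).card : ℝ)
        = ∑ i ∈ Finset.range k, α * ((intervalSet (S i)).card : ℝ) := Finset.mul_sum _ _ _
      _ ≤ ∑ i ∈ Finset.range k, ∑ j ∈ S i, (j.p : ℝ) := by
          apply Finset.sum_le_sum
          intro i hi
          exact h1 i (le_of_lt (Finset.mem_range.mp hi))
      _ = ((∑ i ∈ Finset.range k, ∑ j ∈ S i, j.p.toNat : ℕ) : ℝ) := by
          push_cast
          apply Finset.sum_congr rfl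
          intro i hi
          have := hcast i (le_of_lt (Finset.mem_range.mp hi))
          push_cast at this
          exact this
      _ ≤ ((m * A.card : ℕ) : ℝ) := by exact_mod_cast key
      _ = (m : ℝ) * (A.card : ℝ) := by push_cast; ring
  refine ⟨part1, ?_⟩
  intro hge hk
  by_cases hm : m = 0
  · -- J is empty
    have hJempty : ∀ j ∈ J, False := by
      intro j hj
      have h1' := hσp j hj
      have hp1 : 1 ≤ j.p.toNat := by have := (hJ j hj).1; omega
      have hne : ((Finset.Ico j.r j.d).filter (fun t => j ∈ σ t)).Nonempty := by
        rw [← Finset.card_pos, h1']; omega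
      obtain ⟨t, ht⟩ := hne
      have := hσm t
      rw [hm] at this
      have : σ t = ∅ := Finset.card_eq_zero.mp (Nat.le_zero.mp this)
      have := (Finset.mem_filter.mp ht).2
      simp [‹σ t = ∅›] at this
    have hS0 : S 0 = ∅ := by
      rw [Finset.eq_empty_iff_forall_notMem]
      intro j hj
      exact hJempty j (hsub 0 (Nat.zero_le k) hj)
    rw [hS0]
    simp [intervalSet]
  · have hmpos : (0 : ℝ) < (m : ℝ) := by positivity
    have hlow : α * (k : ℝ) * ((intervalSet (S 0)).card : ℝ)
        ≤ α * ∑ i ∈ Finset.range k, ((intervalSet (S i)).card : ℝ) := by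
      have : (k : ℝ) * ((intervalSet (S 0)).card : ℝ)
          ≤ ∑ i ∈ Finset.range k, ((intervalSet (S i)).card : ℝ) := by
        calc (k : ℝ) * ((intervalSet (S 0)).card : ℝ)
            = ∑ _i ∈ Finset.range k, ((intervalSet (S 0)).card : ℝ) := by
              rw [Finset.sum_const, Finset.card_range, nsmul_eq_mul]
          _ ≤ ∑ i ∈ Finset.range k, ((intervalSet (S i)).card : ℝ) := by
              apply Finset.sum_le_sum
              intro i hi
              exact_mod_cast hge i (le_of_lt (Finset.mem_range.mp hi))
      calc α * (k : ℝ) * ((intervalSet (S 0)).card : ℝ)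
          = α * ((k : ℝ) * ((intervalSet (S 0)).card : ℝ)) := by ring
        _ ≤ α * ∑ i ∈ Finset.range k, ((intervalSet (S i)).card : ℝ) :=
            mul_le_mul_of_nonneg_left this (le_of_lt hα0)
    have hS0nn : (0 : ℝ) ≤ ((intervalSet (S 0)).card : ℝ) := Nat.cast_nonneg _
    have h2m : 2 * (m : ℝ) * ((intervalSet (S 0)).card : ℝ)
        ≤ α * (k : ℝ) * ((intervalSet (S 0)).card : ℝ) :=
      mul_le_mul_of_nonneg_right hk hS0nn
    have hfinal : 2 * (m : ℝ) * ((intervalSet (S 0)).card : ℝ)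
        ≤ (m : ℝ) * (A.card : ℝ) := le_trans h2m (le_trans hlow part1)
    have : 2 * ((intervalSet (S 0)).card : ℝ) ≤ (A.card : ℝ) := by
      nlinarith
    exact_mod_cast this
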